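/- Let C be a (possibly shortened) proper array code with modulus q, three block-rows (column-weight r = 3) and retained block-column label set S ⊆ [0,q−1]. The Tanner graph of C contains a cycle of length six if and only if there exist three distinct labels i, j, k ∈ S satisfying −2i + j + k ≡ 0 (mod q). -/

import Mathlib

/-- The Tanner graph of a (possibly shortened) array code with modulus `q`,
block-row labels `a 0, …, a (r-1)` (elements of `ZMod q`), and retained
block-column label set `S ⊆ ZMod q`.  Row vertices are pairs `(i, x)`
(block-row `i`, row `x` within the block); column vertices are pairs `(j, y)`
with `j ∈ S` (block-column labeled `j`, column `y` within the block).
A row `(i, x)` is adjacent to a column `(j, y)` iff the corresponding entry of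
the parity-check matrix, i.e. entry `(x, y)` of `P ^ (a i * j)`, equals `1`,
which happens iff `y = x + a i * j`. -/
def tannerGraph (q r : ℕ) (a : Fin r → ZMod q) (S : Finset (ZMod q)) :
    SimpleGraph ((Fin r × ZMod q) ⊕ ({j // j ∈ S} × ZMod q)) where
  Adj u v :=
    match u, v with
    | Sum.inl (i, x), Sum.inr (j, y) => y = x + a i * (j : ZMod q)
    | Sum.inr (j, y), Sum.inl (i, x) => y = x + a i * (j : ZMod q)
    | _, _ => False
  symm := by
    constructor
    rintro (⟨i, x⟩ | ⟨j, y⟩) (⟨i', x'⟩ | ⟨j', y'⟩) h <;> simp_all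
  loopless := by
    constructor
    rintro (⟨i, x⟩ | ⟨j, y⟩) h <;> simp_all

/-- Let `C` be a (possibly shortened) proper array code with modulus
`q` (an odd prime), three block-rows whose labels form an arithmetic progression
`a i = a₀ + i·d` with common difference `d ≢ 0 (mod q)` (and distinct labels),
and retained block-column label set `S`.  The Tanner graph of `C` contains a
cycle of length six iff there are three distinct labels `i, j, k ∈ S` with
`-2i + j + k ≡ 0 (mod q)`. -/
lemma keyB {q : ℕ} (hq : q.Prime) (d : ZMod q) (hd : d ≠ 0) (S : Finset (ZMod q))
    (i1 i2 i3 : Fin 3) (h12 : i1 ≠ i2) (h23 : i2 ≠ i3) (h13 : i1 ≠ i3)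
    (j1 j2 j3 : ZMod q) (hj1 : j1 ∈ S) (hj2 : j2 ∈ S) (hj3 : j3 ∈ S)
    (e12 : j1 ≠ j2) (e23 : j2 ≠ j3) (e13 : j1 ≠ j3)
    (heq : d * ((((i1:ℕ):ZMod q) - ((i2:ℕ):ZMod q)) * j1
        + (((i2:ℕ):ZMod q) - ((i3:ℕ):ZMod q)) * j2
        + (((i3:ℕ):ZMod q) - ((i1:ℕ):ZMod q)) * j3) = 0) :
    ∃ i ∈ S, ∃ j ∈ S, ∃ k ∈ S, i ≠ j ∧ i ≠ k ∧ j ≠ k ∧ -2 * i + j + k = 0 := by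
  haveI : Fact q.Prime := ⟨hq⟩
  have heq' : (((i1:ℕ):ZMod q) - ((i2:ℕ):ZMod q)) * j1
        + (((i2:ℕ):ZMod q) - ((i3:ℕ):ZMod q)) * j2
        + (((i3:ℕ):ZMod q) - ((i1:ℕ):ZMod q)) * j3 = 0 := by
    rcases mul_eq_zero.mp heq with h | h
    · exact absurd h hd
    · exact h
  clear heq
  fin_cases i1 <;> fin_cases i2 <;> fin_cases i3 <;> simp_all
  · exact ⟨j3, hj3, j1, hj1, j2, hj2, Ne.symm e13, Ne.symm e23, e12, by linear_combination -heq'⟩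
  · exact ⟨j1, hj1, j2, hj2, j3, hj3, e12, e13, e23, by linear_combination heq'⟩
  · exact ⟨j2, hj2, j1, hj1, j3, hj3, Ne.symm e12, e23, e13, by linear_combination heq'⟩
  · exact ⟨j2, hj2, j1, hj1, j3, hj3, Ne.symm e12, e23, e13, by linear_combination -heq'⟩
  · exact ⟨j1, hj1, j2, hj2, j3, hj3, e12, e13, e23, by linear_combination -heq'⟩
  · exact ⟨j3, hj3, j1, hj1, j2, hj2, Ne.symm e13, Ne.symm e23, e12, by linear_combination heq'⟩

lemma hexagon {q : ℕ} (hq : q.Prime) (a : Fin 3 → ZMod q) (a₀ d : ZMod q) (hd : d ≠ 0)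
    (hAP : ∀ i : Fin 3, a i = a₀ + (i : ℕ) * d) (S : Finset (ZMod q))
    (i1 i2 i3 : Fin 3) (h12 : i1 ≠ i2) (h23 : i2 ≠ i3) (h13 : i1 ≠ i3)
    (j1 j2 j3 : ZMod q) (hj1 : j1 ∈ S) (hj2 : j2 ∈ S) (hj3 : j3 ∈ S)
    (e12 : j1 ≠ j2) (e23 : j2 ≠ j3) (e13 : j1 ≠ j3)
    (E : (a i1 - a i2) * j1 + (a i2 - a i3) * j2 + (a i3 - a i1) * j3 = 0) :
    ∃ i ∈ S, ∃ j ∈ S, ∃ k ∈ S, i ≠ j ∧ i ≠ k ∧ j ≠ k ∧ -2 * i + j + k = 0 := by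
  refine keyB hq d hd S i1 i2 i3 h12 h23 h13 j1 j2 j3 hj1 hj2 hj3 e12 e23 e13 ?_
  simp only [hAP] at E
  linear_combination E

theorem pac_r3_six_cycle_iff (q : ℕ) (hq : q.Prime) (hqodd : Odd q)
    (a : Fin 3 → ZMod q) (a₀ d : ZMod q) (hd : d ≠ 0)
    (hAP : ∀ i : Fin 3, a i = a₀ + (i : ℕ) * d) (ha : Function.Injective a)
    (S : Finset (ZMod q)) :
    (∃ (v : (Fin 3 × ZMod q) ⊕ ({j // j ∈ S} × ZMod q))
        (c : (tannerGraph q 3 a S).Walk v v), c.IsCycle ∧ c.length = 6) ↔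
      ∃ i ∈ S, ∃ j ∈ S, ∃ k ∈ S, i ≠ j ∧ i ≠ k ∧ j ≠ k ∧
        -2 * i + j + k = 0 := by
  constructor
  · intro h
    obtain ⟨v, c, hc, hl⟩ := h
    cases c with
    | nil => simp at hl
    | cons h1 c =>
    rename_i w1
    cases c with
    | nil => simp at hl
    | cons h2 c =>
    rename_i w2
    cases c with
    | nil => simp at hl
    | cons h3 c =>
    rename_i w3
    cases c with
    | nil => simp at hl
    | cons h4 c =>
    rename_i w4
    cases c with
    | nil => simp at hl
    | cons h5 c =>
    rename_i w5
    cases c with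
    | nil => simp at hl
    | cons h6 c =>
    rename_i w6
    cases c with
    | cons h7 c => simp at hl
    | nil =>
    have hnd := hc.support_nodup
    simp only [SimpleGraph.Walk.support_cons, SimpleGraph.Walk.support_nil,
      List.tail_cons, List.nodup_cons, List.mem_cons, List.mem_singleton,
      List.not_mem_nil, List.nodup_nil, not_or] at hnd
    push_neg at hnd
    obtain ⟨⟨n12, n13, n14, n15, n1v⟩, ⟨n23, n24, n25, n2v⟩, ⟨n34, n35, n3v⟩, ⟨n45, n4v⟩, n5v, -⟩ := hnd
    obtain ⟨i1, x1⟩ | ⟨⟨j1, m1⟩, y1⟩ := v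
    · -- start at a row vertex
      obtain ⟨i, x⟩ | ⟨⟨j1, m1⟩, y1⟩ := w1
      · exact False.elim h1
      obtain ⟨i2, x2⟩ | ⟨jj, yy⟩ := w2
      swap
      · exact False.elim h2
      obtain ⟨i, x⟩ | ⟨⟨j2, m2⟩, y2⟩ := w3
      · exact False.elim h3
      obtain ⟨i3, x3⟩ | ⟨jj, yy⟩ := w4
      swap
      · exact False.elim h4
      obtain ⟨i, x⟩ | ⟨⟨j3, m3⟩, y3⟩ := w5
      · exact False.elim h5
      have e1 : y1 = x1 + a i1 * j1 := h1
      have e2 : y1 = x2 + a i2 * j1 := h2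
      have e3 : y2 = x2 + a i2 * j2 := h3
      have e4 : y2 = x3 + a i3 * j2 := h4
      have e5 : y3 = x3 + a i3 * j3 := h5
      have e6 : y3 = x1 + a i1 * j3 := h6
      have h12 : i1 ≠ i2 := by
        rintro rfl
        have hx : x1 = x2 := by linear_combination e2 - e1
        exact n2v.1 (by rw [hx])
      have h23 : i2 ≠ i3 := by
        rintro rfl
        have hx : x2 = x3 := by linear_combination e4 - e3
        exact n24 (by rw [hx])
      have h13 : i1 ≠ i3 := by
        rintro rfl
        have hx : x1 = x3 := by linear_combination e5 - e6
        exact n4v.1 (by rw [hx])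
      have f12 : j1 ≠ j2 := by
        intro h
        have hy : y1 = y2 := by rw [h] at e2; linear_combination e2 - e3
        exact n13 (by subst h; rw [hy])
      have f23 : j2 ≠ j3 := by
        intro h
        have hy : y2 = y3 := by rw [h] at e4; linear_combination e4 - e5
        exact n35 (by subst h; rw [hy])
      have f13 : j1 ≠ j3 := by
        intro h
        have hy : y1 = y3 := by rw [h] at e1; linear_combination e1 - e6
        exact n15 (by subst h; rw [hy])
      exact hexagon hq a a₀ d hd hAP S i1 i2 i3 h12 h23 h13 j1 j2 j3 m1 m2 m3 f12 f23 f13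
        (by linear_combination e2 - e1 + e4 - e3 + e6 - e5)
    · -- start at a column vertex
      obtain ⟨i1, x1⟩ | ⟨jj, yy⟩ := w1
      swap
      · exact False.elim h1
      obtain ⟨i, x⟩ | ⟨⟨j2, m2⟩, y2⟩ := w2
      · exact False.elim h2
      obtain ⟨i2, x2⟩ | ⟨jj, yy⟩ := w3
      swap
      · exact False.elim h3
      obtain ⟨i, x⟩ | ⟨⟨j3, m3⟩, y3⟩ := w4
      · exact False.elim h4
      obtain ⟨i3, x3⟩ | ⟨jj, yy⟩ := w5
      swap
      · exact False.elim h5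
      have e1 : y1 = x1 + a i1 * j1 := h1
      have e2 : y2 = x1 + a i1 * j2 := h2
      have e3 : y2 = x2 + a i2 * j2 := h3
      have e4 : y3 = x2 + a i2 * j3 := h4
      have e5 : y3 = x3 + a i3 * j3 := h5
      have e6 : y1 = x3 + a i3 * j1 := h6
      have h12 : i1 ≠ i2 := by
        rintro rfl
        have hx : x1 = x2 := by linear_combination e3 - e2
        exact n13 (by rw [hx])
      have h23 : i2 ≠ i3 := by
        rintro rfl
        have hx : x2 = x3 := by linear_combination e5 - e4
        exact n35 (by rw [hx])
      have h13 : i1 ≠ i3 := by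
        rintro rfl
        have hx : x1 = x3 := by linear_combination e6 - e1
        exact n15 (by rw [hx])
      have f12 : j1 ≠ j2 := by
        intro h
        have hy : y1 = y2 := by rw [h] at e1; linear_combination e1 - e2
        exact n2v.1 (by subst h; rw [hy])
      have f23 : j2 ≠ j3 := by
        intro h
        have hy : y2 = y3 := by rw [h] at e3; linear_combination e3 - e4
        exact n24 (by subst h; rw [hy])
      have f13 : j1 ≠ j3 := by
        intro h
        have hy : y1 = y3 := by rw [h] at e6; linear_combination e6 - e5
        exact n4v.1 (by subst h; rw [hy])
      exact hexagon hq a a₀ d hd hAP S i3 i1 i2 (Ne.symm h13) h12 (Ne.symm h23)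
        j1 j2 j3 m1 m2 m3 f12 f23 f13
        (by linear_combination e1 - e2 + e3 - e4 + e5 - e6)
  · intro hiv
    obtain ⟨i, hi, j, hj, k, hk, hij, hik, hjk, hrel⟩ := hiv
    have h1 : (tannerGraph q 3 a S).Adj (Sum.inl (1, 0)) (Sum.inr (⟨j, hj⟩, a 1 * j)) := by
      show a 1 * j = 0 + a 1 * j; ring
    have h2 : (tannerGraph q 3 a S).Adj (Sum.inr (⟨j, hj⟩, a 1 * j))
        (Sum.inl (0, a 1 * j - a 0 * j)) := by
      show a 1 * j = (a 1 * j - a 0 * j) + a 0 * j; ring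
    have h3 : (tannerGraph q 3 a S).Adj (Sum.inl (0, a 1 * j - a 0 * j))
        (Sum.inr (⟨i, hi⟩, a 1 * j - a 0 * j + a 0 * i)) := by
      show a 1 * j - a 0 * j + a 0 * i = (a 1 * j - a 0 * j) + a 0 * i; ring
    have h4 : (tannerGraph q 3 a S).Adj (Sum.inr (⟨i, hi⟩, a 1 * j - a 0 * j + a 0 * i))
        (Sum.inl (2, a 1 * j - a 0 * j + a 0 * i - a 2 * i)) := by
      show a 1 * j - a 0 * j + a 0 * i = (a 1 * j - a 0 * j + a 0 * i - a 2 * i) + a 2 * i; ring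
    have h5 : (tannerGraph q 3 a S).Adj (Sum.inl (2, a 1 * j - a 0 * j + a 0 * i - a 2 * i))
        (Sum.inr (⟨k, hk⟩, a 1 * j - a 0 * j + a 0 * i - a 2 * i + a 2 * k)) := by
      show a 1 * j - a 0 * j + a 0 * i - a 2 * i + a 2 * k
          = (a 1 * j - a 0 * j + a 0 * i - a 2 * i) + a 2 * k; ring
    have h6 : (tannerGraph q 3 a S).Adj
        (Sum.inr (⟨k, hk⟩, a 1 * j - a 0 * j + a 0 * i - a 2 * i + a 2 * k))
        (Sum.inl (1, 0)) := by
      show a 1 * j - a 0 * j + a 0 * i - a 2 * i + a 2 * k = 0 + a 1 * k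
      have e0 := hAP 0
      have e1 := hAP 1
      have e2 := hAP 2
      norm_num at e0 e1 e2
      rw [e0, e1, e2]
      linear_combination d * hrel
    refine ⟨_, .cons h1 (.cons h2 (.cons h3 (.cons h4 (.cons h5 (.cons h6 .nil))))), ?_, rfl⟩
    rw [SimpleGraph.Walk.isCycle_def]
    refine ⟨?_, by simp, ?_⟩
    · simp [Sym2.eq_iff, Ne.symm hij, Ne.symm hjk, hik, hij, hjk]
    · simp [Ne.symm hij, Ne.symm hjk, hik, hij, hjk]
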